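/- Let n ≥ 1. (1) For any α, β ∈ P_n there exist α', β' ∈ P_n such that αβ = α'β = αβ', Φ(α',β) = 0 and Φ(α,β') = 0. (2) For any α, β, γ ∈ P_n there exist α', γ' ∈ P_n such that αβγ = α'βγ' and Φ(α',β) + Φ(α'β,γ') = 0. -/

import Mathlib

namespace TPM

/-- Vertex set `{1,…,n} ∪ {1',…,n'}`: `Sum.inl` = unprimed (upper row),
`Sum.inr` = primed (lower row). -/
abbrev V (n : ℕ) := Fin n ⊕ Fin n

/-- The partition monoid `P_n`: set partitions of the `2n`-element set `V n`,
encoded as equivalence relations (setoids). -/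
abbrev PM (n : ℕ) := Setoid (V n)

/-- Three-row vertex set of the product graph: top / middle / bottom. -/
abbrev W (n : ℕ) := Fin n ⊕ (Fin n ⊕ Fin n)

variable {n : ℕ}

/-- First factor: unprimed ↦ top, primed ↦ middle. -/
def topMid : V n → W n
  | Sum.inl i => Sum.inl i
  | Sum.inr i => Sum.inr (Sum.inl i)

/-- Second factor: unprimed ↦ middle, primed ↦ bottom. -/
def midBot : V n → W n
  | Sum.inl i => Sum.inr (Sum.inl i)
  | Sum.inr i => Sum.inr (Sum.inr i)

/-- Embedding of `V n` as top and bottom rows of the three-row set. -/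
def topBot : V n → W n
  | Sum.inl i => Sum.inl i
  | Sum.inr i => Sum.inr (Sum.inr i)

/-- Edge relation of the product graph `Γ(α,β)`. -/
def graphRel (α β : PM n) (x y : W n) : Prop :=
  (∃ u v : V n, α.r u v ∧ x = topMid u ∧ y = topMid v) ∨
  (∃ u v : V n, β.r u v ∧ x = midBot u ∧ y = midBot v)

/-- Connectivity (equivalence closure of the edge relation) in `Γ(α,β)`. -/
def conn (α β : PM n) : W n → W n → Prop := Relation.EqvGen (graphRel α β)

/-- Connectivity in `Γ(α,β)`, as a setoid on the three-row vertex set. -/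
def connSetoid (α β : PM n) : Setoid (W n) :=
  ⟨conn α β, Relation.EqvGen.is_equivalence _⟩

/-- The product of two partitions: `x,y` lie in the same block of `αβ` iff they are
connected in `Γ(α,β)`. -/
def pmul (α β : PM n) : PM n :=
  ⟨fun x y => conn α β (topBot x) (topBot y),
    ⟨fun _ => Relation.EqvGen.refl _, fun h => Relation.EqvGen.symm _ _ h, fun h h' => Relation.EqvGen.trans _ _ _ h h'⟩⟩

/-- A vertex of the three-row set lies in the middle row. -/
def isMid (x : W n) : Prop := ∃ i : Fin n, x = Sum.inr (Sum.inl i)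

/-- `Φ(α,β)`: the number of floating components of `Γ(α,β)`, i.e. connected components
all of whose vertices lie in the middle row. -/
noncomputable def Phi (α β : PM n) : ℕ :=
  Nat.card {c : Quotient (connSetoid α β) //
    ∀ x : W n, Quotient.mk (connSetoid α β) x = c → isMid x}

/-- The rank of a partition: the number of transversal blocks (blocks containing both an
unprimed and a primed element). -/
noncomputable def rnk (α : PM n) : ℕ :=
  Nat.card {c : Quotient α //
    (∃ i : Fin n, Quotient.mk α (Sum.inl i) = c) ∧ ∃ i : Fin n, Quotient.mk α (Sum.inr i) = c}

/-- Which row of `V n` a point lies in. -/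
def side : V n → Bool
  | Sum.inl _ => true
  | Sum.inr _ => false

/-- `α̂`: split each transversal of `α` into its unprimed part and its primed part. -/
def hat (α : PM n) : PM n :=
  ⟨fun x y => α.r x y ∧ side x = side y,
    ⟨fun x => ⟨α.iseqv.refl x, rfl⟩,
     fun h => ⟨α.iseqv.symm h.1, h.2.symm⟩,
     fun h h' => ⟨α.iseqv.trans h.1 h'.1, h.2.trans h'.2⟩⟩⟩

/-- The twisted product on `ℕ × P_n`:  `(i,α)(j,β) = (i + j + Φ(α,β), αβ)`. -/
noncomputable def tmul (a b : ℕ × PM n) : ℕ × PM n :=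
  (a.1 + b.1 + Phi a.2 b.2, pmul a.2 b.2)

/-- A congruence on a set equipped with a binary operation: an equivalence relation
compatible with the operation on both sides. -/
def IsCongruence {M : Type*} (mul : M → M → M) (σ : M → M → Prop) : Prop :=
  Equivalence σ ∧ ∀ x y a, σ x y → σ (mul a x) (mul a y) ∧ σ (mul x a) (mul y a)

/-- Green's relation `R`: equality of the right ideals `xM = yM`. -/
def greenR {M : Type*} (mul : M → M → M) (x y : M) : Prop :=
  Set.range (mul x) = Set.range (mul y)

/-- Green's relation `L`: `Mx = My`. -/
def greenL {M : Type*} (mul : M → M → M) (x y : M) : Prop :=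
  Set.range (fun a => mul a x) = Set.range (fun a => mul a y)

/-- The principal two-sided ideal `MxM`. -/
def jSet {M : Type*} (mul : M → M → M) (x : M) : Set M :=
  Set.range (fun p : M × M => mul (mul p.1 x) p.2)

/-- Green's relation `J`: `MxM = MyM`. -/
def greenJ {M : Type*} (mul : M → M → M) (x y : M) : Prop :=
  jSet mul x = jSet mul y

/-- Green's relation `H = R ∩ L`. -/
def greenH {M : Type*} (mul : M → M → M) (x y : M) : Prop :=
  greenR mul x y ∧ greenL mul x y

/-- Green's relation `D = R ∘ L`. -/
def greenD {M : Type*} (mul : M → M → M) (x y : M) : Prop :=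
  ∃ z, greenR mul x z ∧ greenL mul z y

/-- `pd(α,β)` satisfies `P`, where `α` has `p` transversals: there are representatives
`a s` of the upper parts of the `p` (pairwise distinct) transversals of `α`, with `b s`
representing the corresponding lower parts, and a permutation `π` with `P π` such that the
block of `β` containing `a s` contains `b (π s)`.  (For H-related `α, β ∈ D_p` this says
exactly that some representation of the permutational difference `pd(α,β)` satisfies `P`.) -/
def pdIn (p : ℕ) (P : Equiv.Perm (Fin p) → Prop) (α β : PM n) : Prop :=
  ∃ (a b : Fin p → Fin n) (π : Equiv.Perm (Fin p)),
    (∀ s t, α.r (Sum.inl (a s)) (Sum.inl (a t)) → s = t) ∧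
    (∀ s, α.r (Sum.inl (a s)) (Sum.inr (b s))) ∧
    (∀ s, β.r (Sum.inl (a s)) (Sum.inr (b (π s)))) ∧
    P π

/-- The relation `ν_N` on `D_p`, for a subgroup `N ≤ S_p`:  H-related pairs of rank-`p`
partitions whose permutational difference lies in `N`. -/
def nuRel (p : ℕ) (N : Subgroup (Equiv.Perm (Fin p))) (α β : PM n) : Prop :=
  rnk α = p ∧ rnk β = p ∧ greenH pmul α β ∧ pdIn p (· ∈ N) α β

/-- The congruence `(m, m+d)^♯` on the additive monoid `ℕ` (intended for `d ≥ 1`). -/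
def natCong (m d : ℕ) (i j : ℕ) : Prop :=
  i = j ∨ (m ≤ i ∧ m ≤ j ∧ i % d = j % d)

/-- `min θ ≤ i` for a congruence `θ` on `ℕ` (with `min Δ_ℕ = ∞`). -/
def minLE (θ : ℕ → ℕ → Prop) (i : ℕ) : Prop :=
  ∃ a b, θ a b ∧ a ≠ b ∧ a ≤ i

/-- `k ≤ min θ` for a congruence `θ` on `ℕ` (with `min Δ_ℕ = ∞`). -/
def leMin (k : ℕ) (θ : ℕ → ℕ → Prop) : Prop :=
  ∀ a b, θ a b → a ≠ b → k ≤ a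

/-- The possible entries of a C-matrix. -/
inductive CEntry : Type
  | delta | muUp | muDown | mu | lam | rho | R
  | nsym (q : ℕ) (N : Subgroup (Equiv.Perm (Fin q)))

/-- Whether a C-matrix entry is an N-symbol. -/
def isNsym : CEntry → Prop
  | CEntry.nsym _ _ => True
  | _ => False

/-- The allowed values of the symbol `ζ` in row types RT2, RT5, RT6. -/
def isZeta (e : CEntry) : Prop :=
  e = CEntry.mu ∨ e = CEntry.muUp ∨ e = CEntry.muDown ∨ e = CEntry.delta

/-- The allowed values of the symbol `ξ` in row types RT4–RT7: any of `μ,ρ,λ,R` if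
`d = 1`, and only `μ` if `d > 1`. -/
def xiOK (d : ℕ) (e : CEntry) : Prop :=
  e = CEntry.mu ∨ (d = 1 ∧ (e = CEntry.rho ∨ e = CEntry.lam ∨ e = CEntry.R))

/-- Row type RT1 for rows 0 and 1: all entries `Δ`. -/
def RT1 (M0 M1 : ℕ → CEntry) : Prop :=
  (∀ i, M0 i = CEntry.delta) ∧ (∀ i, M1 i = CEntry.delta)

/-- Row type RT2. -/
def RT2 (Θ0 Θ1 : ℕ → ℕ → Prop) (M0 M1 : ℕ → CEntry) : Prop :=
  Θ0 = Eq ∧ Θ1 = Eq ∧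
  ∃ i ζ, isZeta ζ ∧
    (∀ j, j < i → M0 j = CEntry.delta) ∧ (∀ j, i ≤ j → M0 j = CEntry.mu) ∧
    (∀ j, j < i → M1 j = CEntry.delta) ∧ M1 i = ζ ∧ (∀ j, i < j → M1 j = CEntry.mu)

/-- Row type RT3. -/
def RT3 (Θ0 : ℕ → ℕ → Prop) (M0 M1 : ℕ → CEntry) : Prop :=
  ∃ m ξ, Θ0 = natCong m 1 ∧ (ξ = CEntry.rho ∨ ξ = CEntry.lam ∨ ξ = CEntry.R) ∧
    (∀ i, M1 i = CEntry.delta) ∧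
    (∀ j, j < m → M0 j = CEntry.delta) ∧ (∀ j, m ≤ j → M0 j = ξ)

/-- Row type RT4. -/
def RT4 (Θ0 Θ1 : ℕ → ℕ → Prop) (M0 M1 : ℕ → CEntry) : Prop :=
  ∃ m d ξ, 1 ≤ d ∧ Θ0 = natCong m d ∧ Θ1 = natCong m d ∧ xiOK d ξ ∧
    (∀ j, j < m → M0 j = CEntry.delta ∧ M1 j = CEntry.delta) ∧
    (∀ j, m ≤ j → M0 j = ξ ∧ M1 j = ξ)

/-- Row type RT5. -/
def RT5 (Θ0 Θ1 : ℕ → ℕ → Prop) (M0 M1 : ℕ → CEntry) : Prop :=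
  ∃ m d i ξ ζ, 1 ≤ d ∧ i < m ∧ Θ0 = natCong m d ∧ Θ1 = natCong (m + 1) d ∧
    xiOK d ξ ∧ isZeta ζ ∧
    (∀ j, j < i → M0 j = CEntry.delta) ∧ (∀ j, i ≤ j → j < m → M0 j = CEntry.mu) ∧
    (∀ j, m ≤ j → M0 j = ξ) ∧
    (∀ j, j < i → M1 j = CEntry.delta) ∧ M1 i = ζ ∧
    (∀ j, i < j → j ≤ m → M1 j = CEntry.mu) ∧ (∀ j, m < j → M1 j = ξ)

/-- Row type RT6. -/
def RT6 (Θ0 Θ1 : ℕ → ℕ → Prop) (M0 M1 : ℕ → CEntry) : Prop :=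
  ∃ m l d ξ ζ, 1 ≤ d ∧ m < l ∧ Θ0 = natCong m d ∧ Θ1 = natCong l d ∧
    xiOK d ξ ∧ isZeta ζ ∧
    (∀ j, j < m → M0 j = CEntry.delta) ∧ (∀ j, m ≤ j → M0 j = ξ) ∧
    (∀ j, j < l - 1 → M1 j = CEntry.delta) ∧ M1 (l - 1) = ζ ∧ (∀ j, l ≤ j → M1 j = ξ)

/-- Row type RT7. -/
def RT7 (Θ0 Θ1 : ℕ → ℕ → Prop) (M0 M1 : ℕ → CEntry) : Prop :=
  ∃ m l d ξ, 1 ≤ d ∧ 0 < m ∧ m + 1 < l ∧ (l - 1) % d = m % d ∧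
    Θ0 = natCong m d ∧ Θ1 = natCong l d ∧ xiOK d ξ ∧
    (∀ j, j < m - 1 → M0 j = CEntry.delta) ∧ M0 (m - 1) = CEntry.mu ∧
    (∀ j, m ≤ j → M0 j = ξ) ∧
    (∀ j, j < l - 1 → M1 j = CEntry.delta) ∧ M1 (l - 1) = CEntry.mu ∧
    (∀ j, l ≤ j → M1 j = ξ)

/-- Row type RT8 for a row `q ≥ 2`: all entries `Δ`. -/
def RT8 (Mq : ℕ → CEntry) : Prop := ∀ i, Mq i = CEntry.delta

/-- Row type RT9 for a row `q ≥ 2`. -/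
def RT9 (q : ℕ) (Θq : ℕ → ℕ → Prop) (Mq : ℕ → CEntry) : Prop :=
  ∃ (i k : ℕ) (Ns : ℕ → Subgroup (Equiv.Perm (Fin q))),
    i ≤ k ∧ leMin k Θq ∧
    (∀ j, i ≤ j → j ≤ k → Ns j ≠ ⊥ ∧ (Ns j).Normal) ∧
    (∀ j j', i ≤ j → j ≤ j' → j' ≤ k → Ns j ≤ Ns j') ∧
    (∀ j, j < i → Mq j = CEntry.delta) ∧
    (∀ j, i ≤ j → j < k → Mq j = CEntry.nsym q (Ns j)) ∧
    (∀ j, k ≤ j → Mq j = CEntry.nsym q (Ns k))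

/-- Row type RT10 for a row `q ≥ 2`. -/
def RT10 (q : ℕ) (Θq : ℕ → ℕ → Prop) (Mq : ℕ → CEntry) : Prop :=
  ∃ (i m : ℕ) (Ns : ℕ → Subgroup (Equiv.Perm (Fin q))),
    i ≤ m ∧ Θq = natCong m 1 ∧
    (∀ j, i ≤ j → j < m → Ns j ≠ ⊥ ∧ (Ns j).Normal) ∧
    (∀ j j', i ≤ j → j ≤ j' → j' < m → Ns j ≤ Ns j') ∧
    (∀ j, j < i → Mq j = CEntry.delta) ∧
    (∀ j, i ≤ j → j < m → Mq j = CEntry.nsym q (Ns j)) ∧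
    (∀ j, m ≤ j → Mq j = CEntry.R)

/-- A C-pair for `P_n^Φ`: a descending chain `Θ = (θ_0 ⊇ ⋯ ⊇ θ_n)` of congruences on
`(ℕ,+)` together with a matrix `M = (M_{qi})`, `0 ≤ q ≤ n`, `i ∈ ℕ`, whose rows 0 and 1
jointly have one of the types RT1–RT7, whose rows `q ≥ 2` have one of the types RT8–RT10,
and which satisfies the verticality conditions (V1) and (V2). -/
def IsCPair (n : ℕ) (Θ : ℕ → ℕ → ℕ → Prop) (M : ℕ → ℕ → CEntry) : Prop :=
  (∀ q, q ≤ n → IsCongruence (· + ·) (Θ q)) ∧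
  (∀ q r, q ≤ r → r ≤ n → ∀ i j, Θ r i j → Θ q i j) ∧
  (RT1 (M 0) (M 1) ∨ RT2 (Θ 0) (Θ 1) (M 0) (M 1) ∨ RT3 (Θ 0) (M 0) (M 1) ∨
    RT4 (Θ 0) (Θ 1) (M 0) (M 1) ∨ RT5 (Θ 0) (Θ 1) (M 0) (M 1) ∨
    RT6 (Θ 0) (Θ 1) (M 0) (M 1) ∨ RT7 (Θ 0) (Θ 1) (M 0) (M 1)) ∧
  (∀ q, 2 ≤ q → q ≤ n → (RT8 (M q) ∨ RT9 q (Θ q) (M q) ∨ RT10 q (Θ q) (M q))) ∧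
  (∀ q i, 1 ≤ q → q ≤ n → isNsym (M q i) →
    ¬(M (q - 1) i = CEntry.delta ∨ M (q - 1) i = CEntry.muUp ∨
      M (q - 1) i = CEntry.muDown ∨ isNsym (M (q - 1) i))) ∧
  (∀ q i, 2 ≤ q → q ≤ n → M q i = CEntry.R → M (q - 1) i = CEntry.R)

/-- The relation `cg(Θ,M)` on `P_n^Φ` associated with a C-pair `(Θ,M)`: conditions
(C1)–(C8). -/
def cg (n : ℕ) (Θ : ℕ → ℕ → ℕ → Prop) (M : ℕ → ℕ → CEntry)
    (a b : ℕ × PM n) : Prop :=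
  -- (C1)
  (M (rnk a.2) a.1 = CEntry.delta ∧ M (rnk b.2) b.1 = CEntry.delta ∧
    Θ (rnk a.2) a.1 b.1 ∧ a.2 = b.2) ∨
  -- (C2)
  (M (rnk a.2) a.1 = CEntry.R ∧ M (rnk b.2) b.1 = CEntry.R) ∨
  -- (C3)
  (∃ p N, M (rnk a.2) a.1 = CEntry.nsym p N ∧ M (rnk b.2) b.1 = CEntry.nsym p N ∧
    Θ (rnk a.2) a.1 b.1 ∧ rnk a.2 = p ∧ greenH pmul a.2 b.2 ∧ pdIn p (· ∈ N) a.2 b.2) ∨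
  -- (C4)
  (M (rnk a.2) a.1 = CEntry.lam ∧ M (rnk b.2) b.1 = CEntry.lam ∧
    greenL pmul (hat a.2) (hat b.2)) ∨
  -- (C5)
  (M (rnk a.2) a.1 = CEntry.rho ∧ M (rnk b.2) b.1 = CEntry.rho ∧
    greenR pmul (hat a.2) (hat b.2)) ∨
  -- (C6)
  (M (rnk a.2) a.1 = CEntry.muDown ∧ M (rnk b.2) b.1 = CEntry.muDown ∧
    hat a.2 = hat b.2 ∧ greenL pmul a.2 b.2) ∨
  -- (C7)
  (M (rnk a.2) a.1 = CEntry.muUp ∧ M (rnk b.2) b.1 = CEntry.muUp ∧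
    hat a.2 = hat b.2 ∧ greenR pmul a.2 b.2) ∨
  -- (C8)
  (M (rnk a.2) a.1 = CEntry.mu ∧ M (rnk b.2) b.1 = CEntry.mu ∧
    hat a.2 = hat b.2 ∧
    ((rnk a.2 = rnk b.2 ∧ Θ (rnk a.2) a.1 b.1) ∨
     (rnk a.2 ≠ rnk b.2 ∧ Θ 0 (a.1 + rnk b.2) (b.1 + rnk a.2) ∧
        ¬ minLE (Θ (rnk a.2)) a.1 ∧ ¬ minLE (Θ (rnk b.2)) b.1) ∨
     (rnk a.2 ≠ rnk b.2 ∧ Θ 0 (a.1 + rnk b.2) (b.1 + rnk a.2) ∧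
        minLE (Θ (rnk a.2)) a.1 ∧ minLE (Θ (rnk b.2)) b.1)))

/-- The C-pair `(Θ,M)` is exceptional with exceptional row `q`, where
`θ_q = (m, m+2d)^♯`. -/
def ExcAt (n : ℕ) (Θ : ℕ → ℕ → ℕ → Prop) (M : ℕ → ℕ → CEntry) (q m d : ℕ) : Prop :=
  2 ≤ q ∧ q ≤ n ∧ 1 ≤ d ∧ Θ q = natCong m (2 * d) ∧
  ((2 < q ∧ M q m = CEntry.nsym q (alternatingGroup (Fin q))) ∨
   (q = 2 ∧ M 2 m = CEntry.delta ∧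
     (M 1 m = CEntry.mu ∨ M 1 m = CEntry.rho ∨ M 1 m = CEntry.lam ∨ M 1 m = CEntry.R) ∧
     (∀ i j, natCong m d i j → Θ 1 i j)))

/-- The exceptional congruence `cgx(Θ,M)` associated with an exceptional C-pair:
`cg(Θ,M)` together with the pairs of (C9). -/
def cgx (n : ℕ) (Θ : ℕ → ℕ → ℕ → Prop) (M : ℕ → ℕ → CEntry) (q m d : ℕ)
    (a b : ℕ × PM n) : Prop :=
  cg n Θ M a b ∨
  (rnk a.2 = q ∧ rnk b.2 = q ∧ natCong m d a.1 b.1 ∧ ¬ Θ q a.1 b.1 ∧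
    greenH pmul a.2 b.2 ∧ pdIn q (fun π => π ∉ alternatingGroup (Fin q)) a.2 b.2)

/-- The Rees relation of a subset `I`. -/
def rees {M : Type*} (I : Set M) (x y : M) : Prop := x = y ∨ (x ∈ I ∧ y ∈ I)

/-- A (possibly empty) ideal of `P_n^Φ`: `MIM ⊆ I`. -/
def tIdeal (n : ℕ) (I : Set (ℕ × PM n)) : Prop :=
  ∀ a b x, x ∈ I → tmul (tmul a x) b ∈ I

/-- `I(σ)`: the union of all ideals `I` of `P_n^Φ` whose Rees congruence is contained
in `σ`. -/
def Isig (n : ℕ) (σ : (ℕ × PM n) → (ℕ × PM n) → Prop) : Set (ℕ × PM n) :=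
  ⋃₀ {I | tIdeal n I ∧ ∀ x y, rees I x y → σ x y}

/-- The 0-twisted partition monoid `P_{n,0}^Φ`, carried by `Option (P_n)` with
`none` the zero element `✗`. -/
noncomputable def mul0 (a b : Option (PM n)) : Option (PM n) :=
  match a, b with
  | some α, some β => if Phi α β = 0 then some (pmul α β) else none
  | _, _ => none

/-- `rank a ≤ q`, where `rank ✗ = -∞`. -/
def rnkLE (a : Option (PM n)) (q : ℕ) : Prop :=
  ∀ α, a = some α → rnk α ≤ q

/-- The Rees congruence `R_q` on `P_{n,0}^Φ`. -/
def ReesQ (q : ℕ) (a b : Option (PM n)) : Prop :=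
  a = b ∨ (rnkLE a q ∧ rnkLE b q)

/-- Lift a relation on `P_n` to `P_{n,0}^Φ = P_n ∪ {✗}`. -/
def lift2 (r : PM n → PM n → Prop) (a b : Option (PM n)) : Prop :=
  ∃ α β, a = some α ∧ b = some β ∧ r α β



/-! ### Auxiliary development for `avoid_floating` -/

/-- `i` lies in a floating component of `Γ(α,β)`. -/
def floats (α β : PM n) (i : Fin n) : Prop :=
  ∀ x, conn α β (Sum.inr (Sum.inl i)) x → isMid x

section aux

variable (α β : PM n) (hn : 1 ≤ n)

/-- Vertices of the first factor to be merged with the block of the anchor `1`. -/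
def gL (v : V n) : Prop :=
  (∃ i, v = Sum.inr i ∧ floats α β i) ∨ α.r v (Sum.inl ⟨0, hn⟩)

/-- Vertices of the second factor to be merged with the block of the anchor `1'`. -/
def gR (v : V n) : Prop :=
  (∃ i, v = Sum.inl i ∧ floats α β i) ∨ β.r v (Sum.inr ⟨0, hn⟩)

lemma conn_of_alpha {u v : V n} (h : α.r u v) : conn α β (topMid u) (topMid v) :=
  Relation.EqvGen.rel _ _ (Or.inl ⟨u, v, h, rfl, rfl⟩)

lemma conn_of_beta {u v : V n} (h : β.r u v) : conn α β (midBot u) (midBot v) :=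
  Relation.EqvGen.rel _ _ (Or.inr ⟨u, v, h, rfl, rfl⟩)

lemma floats_mono {i : Fin n} (hf : floats α β i) {x : W n}
    (hx : conn α β x (Sum.inr (Sum.inl i))) : ∀ y, conn α β x y → isMid y :=
  fun y hy => hf y (Relation.EqvGen.trans _ _ _ (Relation.EqvGen.symm _ _ hx) hy)

lemma gL_closed {x y : V n} (hxy : α.r x y) (hy : gL α β hn y) : gL α β hn x := by
  rcases hy with ⟨j, rfl, hf⟩ | hy
  · have hedge : conn α β (topMid x) (Sum.inr (Sum.inl j)) := conn_of_alpha α β hxy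
    cases x with
    | inl k =>
        exfalso
        have := hf _ (Relation.EqvGen.symm _ _ hedge)
        simp [topMid, isMid] at this
    | inr i =>
        exact Or.inl ⟨i, rfl, fun z hz => floats_mono α β hf hedge z hz⟩
  · exact Or.inr (α.iseqv.trans hxy hy)

lemma gR_closed {x y : V n} (hxy : β.r x y) (hy : gR α β hn y) : gR α β hn x := by
  rcases hy with ⟨j, rfl, hf⟩ | hy
  · have hedge : conn α β (midBot x) (Sum.inr (Sum.inl j)) := conn_of_beta α β hxy
    cases x with
    | inr k =>
        exfalso
        have := hf _ (Relation.EqvGen.symm _ _ hedge)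
        simp [midBot, isMid] at this
    | inl i =>
        exact Or.inl ⟨i, rfl, fun z hz => floats_mono α β hf hedge z hz⟩
  · exact Or.inr (β.iseqv.trans hxy hy)

/-- `α` with all floating blocks merged into the block of the anchor. -/
def modL : PM n :=
  ⟨fun x y => α.r x y ∨ (gL α β hn x ∧ gL α β hn y),
   ⟨fun x => Or.inl (α.iseqv.refl x),
    fun h => by
      rcases h with h | ⟨h1, h2⟩
      · exact Or.inl (α.iseqv.symm h)
      · exact Or.inr ⟨h2, h1⟩,
    fun {x y z} h h' => by
      rcases h with h | ⟨h1, h2⟩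
      · rcases h' with h' | ⟨h1', h2'⟩
        · exact Or.inl (α.iseqv.trans h h')
        · exact Or.inr ⟨gL_closed α β hn h h1', h2'⟩
      · rcases h' with h' | ⟨h1', h2'⟩
        · exact Or.inr ⟨h1, gL_closed α β hn (α.iseqv.symm h') h2⟩
        · exact Or.inr ⟨h1, h2'⟩⟩⟩

/-- `β` with all floating blocks merged into the block of the anchor. -/
def modR : PM n :=
  ⟨fun x y => β.r x y ∨ (gR α β hn x ∧ gR α β hn y),
   ⟨fun x => Or.inl (β.iseqv.refl x),
    fun h => by
      rcases h with h | ⟨h1, h2⟩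
      · exact Or.inl (β.iseqv.symm h)
      · exact Or.inr ⟨h2, h1⟩,
    fun {x y z} h h' => by
      rcases h with h | ⟨h1, h2⟩
      · rcases h' with h' | ⟨h1', h2'⟩
        · exact Or.inl (β.iseqv.trans h h')
        · exact Or.inr ⟨gR_closed α β hn h h1', h2'⟩
      · rcases h' with h' | ⟨h1', h2'⟩
        · exact Or.inr ⟨h1, gR_closed α β hn (β.iseqv.symm h') h2⟩
        · exact Or.inr ⟨h1, h2'⟩⟩⟩

/-- Old connectivity implies new connectivity (left version). -/
lemma conn_le_modL {x y : W n} (h : conn α β x y) : conn (modL α β hn) β x y := by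
  refine Relation.EqvGen.mono (fun a b hab => ?_) _ _ h
  rcases hab with ⟨u, v, huv, rfl, rfl⟩ | h'
  · exact Or.inl ⟨u, v, Or.inl huv, rfl, rfl⟩
  · exact Or.inr h'

lemma conn_le_modR {x y : W n} (h : conn α β x y) : conn α (modR α β hn) x y := by
  refine Relation.EqvGen.mono (fun a b hab => ?_) _ _ h
  rcases hab with h' | ⟨u, v, huv, rfl, rfl⟩
  · exact Or.inl h'
  · exact Or.inr ⟨u, v, Or.inl huv, rfl, rfl⟩

/-- Connected (in the old graph) to the anchor's component or to a floating component. -/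
def hL (w : W n) : Prop :=
  conn α β w (Sum.inl ⟨0, hn⟩) ∨ ∃ i, floats α β i ∧ conn α β w (Sum.inr (Sum.inl i))

def hR (w : W n) : Prop :=
  conn α β w (Sum.inr (Sum.inr ⟨0, hn⟩)) ∨ ∃ i, floats α β i ∧ conn α β w (Sum.inr (Sum.inl i))

lemma hL_closed {w w' : W n} (h : conn α β w w') (hw' : hL α β hn w') : hL α β hn w := by
  rcases hw' with h' | ⟨i, hf, h'⟩
  · exact Or.inl (Relation.EqvGen.trans _ _ _ h h')
  · exact Or.inr ⟨i, hf, Relation.EqvGen.trans _ _ _ h h'⟩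

lemma hR_closed {w w' : W n} (h : conn α β w w') (hw' : hR α β hn w') : hR α β hn w := by
  rcases hw' with h' | ⟨i, hf, h'⟩
  · exact Or.inl (Relation.EqvGen.trans _ _ _ h h')
  · exact Or.inr ⟨i, hf, Relation.EqvGen.trans _ _ _ h h'⟩

/-- Candidate equivalence containing the new graph relation (left). -/
def SL (w w' : W n) : Prop := conn α β w w' ∨ (hL α β hn w ∧ hL α β hn w')

def SR (w w' : W n) : Prop := conn α β w w' ∨ (hR α β hn w ∧ hR α β hn w')

lemma SL_equiv : Equivalence (SL α β hn) := by
  constructor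
  · exact fun x => Or.inl (Relation.EqvGen.refl x)
  · rintro x y (h | ⟨h1, h2⟩)
    · exact Or.inl (Relation.EqvGen.symm _ _ h)
    · exact Or.inr ⟨h2, h1⟩
  · rintro x y z (h | ⟨h1, h2⟩) (h' | ⟨h1', h2'⟩)
    · exact Or.inl (Relation.EqvGen.trans _ _ _ h h')
    · exact Or.inr ⟨hL_closed α β hn h h1', h2'⟩
    · exact Or.inr ⟨h1, hL_closed α β hn (Relation.EqvGen.symm _ _ h') h2⟩
    · exact Or.inr ⟨h1, h2'⟩

lemma SR_equiv : Equivalence (SR α β hn) := by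
  constructor
  · exact fun x => Or.inl (Relation.EqvGen.refl x)
  · rintro x y (h | ⟨h1, h2⟩)
    · exact Or.inl (Relation.EqvGen.symm _ _ h)
    · exact Or.inr ⟨h2, h1⟩
  · rintro x y z (h | ⟨h1, h2⟩) (h' | ⟨h1', h2'⟩)
    · exact Or.inl (Relation.EqvGen.trans _ _ _ h h')
    · exact Or.inr ⟨hR_closed α β hn h h1', h2'⟩
    · exact Or.inr ⟨h1, hR_closed α β hn (Relation.EqvGen.symm _ _ h') h2⟩
    · exact Or.inr ⟨h1, h2'⟩

lemma hL_of_gL {u : V n} (h : gL α β hn u) : hL α β hn (topMid u) := by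
  rcases h with ⟨i, rfl, hf⟩ | h
  · exact Or.inr ⟨i, hf, Relation.EqvGen.refl _⟩
  · exact Or.inl (conn_of_alpha α β h)

lemma hR_of_gR {u : V n} (h : gR α β hn u) : hR α β hn (midBot u) := by
  rcases h with ⟨i, rfl, hf⟩ | h
  · exact Or.inr ⟨i, hf, Relation.EqvGen.refl _⟩
  · exact Or.inl (conn_of_beta α β h)

lemma modL_conn_le {x y : W n} (h : conn (modL α β hn) β x y) : SL α β hn x y := by
  have hsub : ∀ a b : W n, graphRel (modL α β hn) β a b → SL α β hn a b := by
    rintro a b (⟨u, v, huv, rfl, rfl⟩ | h')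
    · rcases huv with huv | ⟨h1, h2⟩
      · exact Or.inl (conn_of_alpha α β huv)
      · exact Or.inr ⟨hL_of_gL α β hn h1, hL_of_gL α β hn h2⟩
    · exact Or.inl (Relation.EqvGen.rel _ _ (Or.inr h'))
  exact ((SL_equiv α β hn).eqvGen_iff).mp (Relation.EqvGen.mono hsub _ _ h)

lemma modR_conn_le {x y : W n} (h : conn α (modR α β hn) x y) : SR α β hn x y := by
  have hsub : ∀ a b : W n, graphRel α (modR α β hn) a b → SR α β hn a b := by
    rintro a b (h' | ⟨u, v, huv, rfl, rfl⟩)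
    · exact Or.inl (Relation.EqvGen.rel _ _ (Or.inl h'))
    · rcases huv with huv | ⟨h1, h2⟩
      · exact Or.inl (conn_of_beta α β huv)
      · exact Or.inr ⟨hR_of_gR α β hn h1, hR_of_gR α β hn h2⟩
  exact ((SR_equiv α β hn).eqvGen_iff).mp (Relation.EqvGen.mono hsub _ _ h)

lemma not_isMid_topBot (x : V n) : ¬ isMid (topBot x) := by
  cases x <;> simp [topBot, isMid]

lemma pmul_modL : pmul α β = pmul (modL α β hn) β := by
  apply Setoid.ext
  intro x y
  constructor
  · exact fun h => conn_le_modL α β hn h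
  · intro h
    rcases modL_conn_le α β hn h with h' | ⟨hx, hy⟩
    · exact h'
    · rcases hx with hx | ⟨i, hf, hx⟩
      · rcases hy with hy | ⟨i, hf, hy⟩
        · exact Relation.EqvGen.trans _ _ _ hx (Relation.EqvGen.symm _ _ hy)
        · exact absurd (floats_mono α β hf hy _ (Relation.EqvGen.refl _))
            (not_isMid_topBot y)
      · exact absurd (floats_mono α β hf hx _ (Relation.EqvGen.refl _))
          (not_isMid_topBot x)

lemma pmul_modR : pmul α β = pmul α (modR α β hn) := by
  apply Setoid.ext
  intro x y
  constructor
  · exact fun h => conn_le_modR α β hn h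
  · intro h
    rcases modR_conn_le α β hn h with h' | ⟨hx, hy⟩
    · exact h'
    · rcases hx with hx | ⟨i, hf, hx⟩
      · rcases hy with hy | ⟨i, hf, hy⟩
        · exact Relation.EqvGen.trans _ _ _ hx (Relation.EqvGen.symm _ _ hy)
        · exact absurd (floats_mono α β hf hy _ (Relation.EqvGen.refl _))
            (not_isMid_topBot y)
      · exact absurd (floats_mono α β hf hx _ (Relation.EqvGen.refl _))
          (not_isMid_topBot x)

/-- Every vertex is connected, in the modified graph, to a non-middle vertex. -/
lemma modL_no_float (w : W n) :
    ∃ x : W n, ¬ isMid x ∧ conn (modL α β hn) β x w := by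
  match w with
  | Sum.inl i => exact ⟨Sum.inl i, by simp [isMid], Relation.EqvGen.refl _⟩
  | Sum.inr (Sum.inr i) => exact ⟨Sum.inr (Sum.inr i), by simp [isMid], Relation.EqvGen.refl _⟩
  | Sum.inr (Sum.inl i) =>
      by_cases hf : floats α β i
      · refine ⟨Sum.inl ⟨0, hn⟩, by simp [isMid], ?_⟩
        have hedge : graphRel (modL α β hn) β (topMid (Sum.inr i)) (topMid (Sum.inl ⟨0, hn⟩)) :=
          Or.inl ⟨_, _, Or.inr ⟨Or.inl ⟨i, rfl, hf⟩, Or.inr (α.iseqv.refl _)⟩, rfl, rfl⟩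
        exact Relation.EqvGen.symm _ _ (Relation.EqvGen.rel _ _ hedge)
      · simp only [floats, not_forall] at hf
        obtain ⟨x, hx, hmid⟩ := hf
        exact ⟨x, hmid, Relation.EqvGen.symm _ _ (conn_le_modL α β hn hx)⟩

lemma modR_no_float (w : W n) :
    ∃ x : W n, ¬ isMid x ∧ conn α (modR α β hn) x w := by
  match w with
  | Sum.inl i => exact ⟨Sum.inl i, by simp [isMid], Relation.EqvGen.refl _⟩
  | Sum.inr (Sum.inr i) => exact ⟨Sum.inr (Sum.inr i), by simp [isMid], Relation.EqvGen.refl _⟩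
  | Sum.inr (Sum.inl i) =>
      by_cases hf : floats α β i
      · refine ⟨Sum.inr (Sum.inr ⟨0, hn⟩), by simp [isMid], ?_⟩
        have hedge : graphRel α (modR α β hn) (midBot (Sum.inl i)) (midBot (Sum.inr ⟨0, hn⟩)) :=
          Or.inr ⟨_, _, Or.inr ⟨Or.inl ⟨i, rfl, hf⟩, Or.inr (β.iseqv.refl _)⟩, rfl, rfl⟩
        exact Relation.EqvGen.symm _ _ (Relation.EqvGen.rel _ _ hedge)
      · simp only [floats, not_forall] at hf
        obtain ⟨x, hx, hmid⟩ := hf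
        exact ⟨x, hmid, Relation.EqvGen.symm _ _ (conn_le_modR α β hn hx)⟩

lemma Phi_modL : Phi (modL α β hn) β = 0 := by
  have : IsEmpty {c : Quotient (connSetoid (modL α β hn) β) //
      ∀ x : W n, Quotient.mk (connSetoid (modL α β hn) β) x = c → isMid x} := by
    constructor
    rintro ⟨c, hc⟩
    obtain ⟨w, rfl⟩ := Quotient.exists_rep c
    obtain ⟨x, hmid, hconn⟩ := modL_no_float α β hn w
    exact hmid (hc x (Quotient.sound hconn))
  simp only [Phi]
  exact Nat.card_of_isEmpty

lemma Phi_modR : Phi α (modR α β hn) = 0 := by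
  have : IsEmpty {c : Quotient (connSetoid α (modR α β hn)) //
      ∀ x : W n, Quotient.mk (connSetoid α (modR α β hn)) x = c → isMid x} := by
    constructor
    rintro ⟨c, hc⟩
    obtain ⟨w, rfl⟩ := Quotient.exists_rep c
    obtain ⟨x, hmid, hconn⟩ := modR_no_float α β hn w
    exact hmid (hc x (Quotient.sound hconn))
  simp only [Phi]
  exact Nat.card_of_isEmpty

end aux

/-- (1) For all `α, β ∈ P_n` there are `α', β'` with
`αβ = α'β = αβ'`, `Φ(α',β) = 0` and `Φ(α,β') = 0`.  (2) For all `α, β, γ ∈ P_n` there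
are `α', γ'` with `αβγ = α'βγ'` and `Φ(α',β) + Φ(α'β,γ') = 0`. -/
theorem avoid_floating (n : ℕ) (hn : 1 ≤ n) :
    (∀ α β : PM n, ∃ α' β' : PM n,
      pmul α β = pmul α' β ∧ pmul α β = pmul α β' ∧ Phi α' β = 0 ∧ Phi α β' = 0) ∧
    (∀ α β γ : PM n, ∃ α' γ' : PM n,
      pmul (pmul α β) γ = pmul (pmul α' β) γ' ∧ Phi α' β + Phi (pmul α' β) γ' = 0) := by
  constructor
  · intro α β
    exact ⟨modL α β hn, modR α β hn, pmul_modL α β hn, pmul_modR α β hn,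
      Phi_modL α β hn, Phi_modR α β hn⟩
  · intro α β γ
    refine ⟨modL α β hn, modR (pmul (modL α β hn) β) γ hn, ?_, ?_⟩
    · rw [← pmul_modL α β hn, ← pmul_modR (pmul α β) γ hn, pmul_modR (pmul α β) γ hn]
    · rw [Phi_modL α β hn, Phi_modR (pmul (modL α β hn) β) γ hn]

end TPM
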